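/- Let τ be the ℚ-algebra automorphism of ℚ[v₁, v₂, v₃, v₄] determined by v₁ ↦ v₂, v₂ ↦ v₁, v₃ ↦ v₄, v₄ ↦ v₃ (the simultaneous exchange of the two pairs of variables). Then the subalgebra of τ-invariant polynomials equals the ℚ-subalgebra of ℚ[v₁, v₂, v₃, v₄] generated by the five elements u₁ := v₁ + v₂, u₂ := v₃ + v₄, u₃ := v₁² + v₂², u₄ := v₃² + v₄², and u₅ := v₁v₄ + v₂v₃. -/

import Mathlib

open MvPolynomial

noncomputable section DoubleSwapAux

def Lmap : MvPolynomial (Fin 4) ℚ →ₐ[ℚ] MvPolynomial (Fin 4) ℚ :=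
  aeval ![X 0 + X 1, X 0 - X 1, X 2 + X 3, X 2 - X 3]

def Mmap : MvPolynomial (Fin 4) ℚ →ₐ[ℚ] MvPolynomial (Fin 4) ℚ :=
  aeval ![C (1/2) * (X 0 + X 1), C (1/2) * (X 0 - X 1),
          C (1/2) * (X 2 + X 3), C (1/2) * (X 2 - X 3)]

def Nmap : MvPolynomial (Fin 4) ℚ →ₐ[ℚ] MvPolynomial (Fin 4) ℚ :=
  aeval ![X 0, - X 1, X 2, - X 3]

lemma two_eq_C : (2 : MvPolynomial (Fin 4) ℚ) = C 2 := (map_ofNat C 2).symm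

lemma L_M : Lmap.comp Mmap = AlgHom.id ℚ _ := by
  apply MvPolynomial.algHom_ext
  intro i
  fin_cases i <;>
    · simp [Lmap, Mmap]
      ring_nf
      rw [two_eq_C, mul_right_comm, ← C_mul]
      norm_num

lemma M_L : Mmap.comp Lmap = AlgHom.id ℚ _ := by
  apply MvPolynomial.algHom_ext
  intro i
  fin_cases i <;>
    · simp [Lmap, Mmap]
      ring_nf
      rw [two_eq_C, mul_right_comm, ← C_mul]
      norm_num

lemma tau_L : (rename ![(1 : Fin 4), 0, 3, 2] : MvPolynomial (Fin 4) ℚ →ₐ[ℚ] _).comp Lmap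
    = Lmap.comp Nmap := by
  apply MvPolynomial.algHom_ext
  intro i
  fin_cases i <;> simp [Lmap, Nmap] <;> ring

lemma Nmap_monomial (a : Fin 4 →₀ ℕ) (c : ℚ) :
    Nmap (monomial a c) = ((-1 : ℚ) ^ (a 1 + a 3)) • monomial a c := by
  rw [Nmap, aeval_monomial, monomial_eq,
    Finsupp.prod_fintype _ _ (fun i => pow_zero _),
    Finsupp.prod_fintype _ _ (fun i => pow_zero _),
    Fin.prod_univ_four, Fin.prod_univ_four]
  simp only [Matrix.cons_val_zero, Matrix.cons_val_one, Matrix.head_cons,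
    Matrix.cons_val_two, Matrix.tail_cons, Matrix.cons_val_three]
  rw [neg_pow, neg_pow, algebraMap_eq, smul_eq_C_mul, C_pow, pow_add]
  ring_nf
  simp only [map_neg, map_one]

lemma coeff_Nmap (a : Fin 4 →₀ ℕ) (Q : MvPolynomial (Fin 4) ℚ) :
    coeff a (Nmap Q) = (-1) ^ (a 1 + a 3) * coeff a Q := by
  induction Q using MvPolynomial.induction_on' with
  | monomial b c =>
    rw [Nmap_monomial, coeff_smul, coeff_monomial]
    split_ifs with h
    · subst h; simp [smul_eq_mul]
    · simp
  | add p q hp hq =>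
    rw [map_add, coeff_add, coeff_add, hp, hq]; ring

lemma pair_pow_mem (a1 a3 : ℕ) (h : Even (a1 + a3)) :
    (X 1 : MvPolynomial (Fin 4) ℚ) ^ a1 * X 3 ^ a3 ∈ Algebra.adjoin ℚ
      ({X 0, X 2, X 1 ^ 2, X 3 ^ 2, X 1 * X 3} : Set (MvPolynomial (Fin 4) ℚ)) := by
  set S : Set (MvPolynomial (Fin 4) ℚ) := {X 0, X 2, X 1 ^ 2, X 3 ^ 2, X 1 * X 3} with hS
  have h2 : (X 1 : MvPolynomial (Fin 4) ℚ) ^ 2 ∈ Algebra.adjoin ℚ S :=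
    Algebra.subset_adjoin (by simp [hS])
  have h4 : (X 3 : MvPolynomial (Fin 4) ℚ) ^ 2 ∈ Algebra.adjoin ℚ S :=
    Algebra.subset_adjoin (by simp [hS])
  have h13 : (X 1 : MvPolynomial (Fin 4) ℚ) * X 3 ∈ Algebra.adjoin ℚ S :=
    Algebra.subset_adjoin (by simp [hS])
  rcases Nat.even_or_odd a1 with h1 | h1
  · have h3 : Even a3 := (Nat.even_add.mp h).mp h1
    obtain ⟨k, hk⟩ := h1
    obtain ⟨l, hl⟩ := h3
    rw [hk, hl, show k + k = 2 * k from by ring, show l + l = 2 * l from by ring,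
      pow_mul, pow_mul]
    exact mul_mem (pow_mem h2 k) (pow_mem h4 l)
  · have h3 : Odd a3 := by
      rcases Nat.even_or_odd a3 with h3 | h3
      · exact absurd ((Nat.even_add.mp h).mpr h3) (Nat.not_even_iff_odd.mpr h1)
      · exact h3
    obtain ⟨k, hk⟩ := h1
    obtain ⟨l, hl⟩ := h3
    rw [hk, hl, show (X 1 : MvPolynomial (Fin 4) ℚ) ^ (2*k+1) * X 3 ^ (2*l+1)
      = (X 1 * X 3) * ((X 1 ^ 2) ^ k * (X 3 ^ 2) ^ l) from by ring]
    exact mul_mem h13 (mul_mem (pow_mem h2 k) (pow_mem h4 l))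

lemma Nmap_invariant_mem (Q : MvPolynomial (Fin 4) ℚ) (h : Nmap Q = Q) :
    Q ∈ Algebra.adjoin ℚ
      ({X 0, X 2, X 1 ^ 2, X 3 ^ 2, X 1 * X 3} : Set (MvPolynomial (Fin 4) ℚ)) := by
  have hcoef : ∀ a ∈ Q.support, Even (a 1 + a 3) := by
    intro a ha
    have hc := coeff_Nmap a Q
    rw [h] at hc
    have hne : coeff a Q ≠ 0 := mem_support_iff.mp ha
    have hsgn : ((-1 : ℚ)) ^ (a 1 + a 3) = 1 := by
      have h2 : (((-1 : ℚ)) ^ (a 1 + a 3) - 1) * coeff a Q = 0 := by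
        rw [sub_mul, one_mul, ← hc, sub_self]
      rcases mul_eq_zero.mp h2 with h3 | h3
      · linarith [h3]
      · exact absurd h3 hne
    exact (neg_one_pow_eq_one_iff_even (by norm_num : (-1 : ℚ) ≠ 1)).mp hsgn
  rw [← support_sum_monomial_coeff Q]
  refine Subalgebra.sum_mem _ fun a ha => ?_
  have : (monomial a (coeff a Q) : MvPolynomial (Fin 4) ℚ)
      = C (coeff a Q) * X 0 ^ a 0 * X 2 ^ a 2 * (X 1 ^ a 1 * X 3 ^ a 3) := by
    rw [monomial_eq, Finsupp.prod_fintype _ _ (fun i => pow_zero _), Fin.prod_univ_four]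
    ring
  rw [this]
  refine mul_mem (mul_mem (mul_mem ?_ ?_) ?_) (pair_pow_mem _ _ (hcoef a ha))
  · rw [← algebraMap_eq]; exact Subalgebra.algebraMap_mem _ _
  · exact pow_mem (Algebra.subset_adjoin (by simp)) _
  · exact pow_mem (Algebra.subset_adjoin (by simp)) _

end DoubleSwapAux

theorem invariants_of_double_swap (P : MvPolynomial (Fin 4) ℚ) :
    rename ![(1 : Fin 4), 0, 3, 2] P = P ↔
      P ∈ Algebra.adjoin ℚ
        ({X 0 + X 1, X 2 + X 3, X 0 ^ 2 + X 1 ^ 2, X 2 ^ 2 + X 3 ^ 2,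
          X 0 * X 3 + X 1 * X 2} : Set (MvPolynomial (Fin 4) ℚ)) := by
  set T := Algebra.adjoin ℚ
        ({X 0 + X 1, X 2 + X 3, X 0 ^ 2 + X 1 ^ 2, X 2 ^ 2 + X 3 ^ 2,
          X 0 * X 3 + X 1 * X 2} : Set (MvPolynomial (Fin 4) ℚ)) with hT
  have hu1 : (X 0 + X 1 : MvPolynomial (Fin 4) ℚ) ∈ T := Algebra.subset_adjoin (by simp)
  have hu2 : (X 2 + X 3 : MvPolynomial (Fin 4) ℚ) ∈ T := Algebra.subset_adjoin (by simp)
  have hu3 : (X 0 ^ 2 + X 1 ^ 2 : MvPolynomial (Fin 4) ℚ) ∈ T := Algebra.subset_adjoin (by simp)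
  have hu4 : (X 2 ^ 2 + X 3 ^ 2 : MvPolynomial (Fin 4) ℚ) ∈ T := Algebra.subset_adjoin (by simp)
  have hu5 : (X 0 * X 3 + X 1 * X 2 : MvPolynomial (Fin 4) ℚ) ∈ T := Algebra.subset_adjoin (by simp)
  constructor
  · intro h
    set Q := Mmap P with hQ
    have hLQ : Lmap Q = P := AlgHom.congr_fun L_M P
    have hinj : Function.Injective Lmap :=
      Function.LeftInverse.injective (g := Mmap) (fun x => AlgHom.congr_fun M_L x)
    have hN : Nmap Q = Q := by
      apply hinj
      have h1 := AlgHom.congr_fun tau_L Q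
      simp only [AlgHom.comp_apply] at h1
      rw [← h1, hLQ, h]
    have hQmem := Nmap_invariant_mem Q hN
    have himg : P ∈ (Algebra.adjoin ℚ
        ({X 0, X 2, X 1 ^ 2, X 3 ^ 2, X 1 * X 3} : Set (MvPolynomial (Fin 4) ℚ))).map Lmap :=
      ⟨Q, hQmem, hLQ⟩
    rw [AlgHom.map_adjoin] at himg
    refine Algebra.adjoin_le ?_ himg
    rintro x ⟨y, hy, rfl⟩
    simp only [Set.mem_insert_iff, Set.mem_singleton_iff] at hy
    rcases hy with rfl | rfl | rfl | rfl | rfl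
    · rw [show Lmap (X 0) = X 0 + X 1 from by simp [Lmap]]; exact hu1
    · rw [show Lmap (X 2) = X 2 + X 3 from by simp [Lmap]]; exact hu2
    · rw [show Lmap (X 1 ^ 2) = 2 * (X 0 ^ 2 + X 1 ^ 2) - (X 0 + X 1) ^ 2 from by
        simp [Lmap]; ring]
      exact sub_mem (mul_mem (by exact_mod_cast Subalgebra.natCast_mem T 2) hu3)
        (pow_mem hu1 2)
    · rw [show Lmap (X 3 ^ 2) = 2 * (X 2 ^ 2 + X 3 ^ 2) - (X 2 + X 3) ^ 2 from by
        simp [Lmap]; ring]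
      exact sub_mem (mul_mem (by exact_mod_cast Subalgebra.natCast_mem T 2) hu4)
        (pow_mem hu2 2)
    · rw [show Lmap (X 1 * X 3) = (X 0 + X 1) * (X 2 + X 3)
          - 2 * (X 0 * X 3 + X 1 * X 2) from by simp [Lmap]; ring]
      exact sub_mem (mul_mem hu1 hu2)
        (mul_mem (by exact_mod_cast Subalgebra.natCast_mem T 2) hu5)
  · intro h
    induction h using Algebra.adjoin_induction with
    | mem x hx =>
      simp only [Set.mem_insert_iff, Set.mem_singleton_iff] at hx
      rcases hx with rfl | rfl | rfl | rfl | rfl <;> simp <;> ring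
    | algebraMap r => simp
    | add x y _ _ hx hy => simp [map_add, hx, hy]
    | mul x y _ _ hx hy => simp [map_mul, hx, hy]
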